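/- Let A be a unital C*-algebra and let S be a set of selfadjoint elements of A each of which lies in the center of A. If b is a selfadjoint element of A that is a least upper bound of S with respect to the canonical partial order on selfadjoint elements (a ≤ c iff c − a is positive), then b lies in the center of A. -/

import Mathlib

open NormedSpace Complex

/-- Let `A` be a unital C*-algebra and let `S` be a set of selfadjoint
elements of `A`, each of which lies in the center of `A`.  If `b` is a selfadjoint element
of `A` that is a least upper bound of `S` with respect to the canonical partial order on
selfadjoint elements (i.e. `b` is an upper bound of `S`, and `b ≤ c` for every selfadjoint
upper bound `c` of `S`), then `b` lies in the center of `A`. -/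
theorem central_of_isLUB_of_central {A : Type*} [CStarAlgebra A]
    [PartialOrder A] [StarOrderedRing A]
    (S : Set A) (hS_sa : ∀ a ∈ S, IsSelfAdjoint a) (hS_central : ∀ a ∈ S, a ∈ Set.center A)
    (b : A) (hb_sa : IsSelfAdjoint b)
    (hb_ub : ∀ a ∈ S, a ≤ b)
    (hb_least : ∀ c : A, IsSelfAdjoint c → (∀ a ∈ S, a ≤ c) → b ≤ c) :
    b ∈ Set.center A := by
  -- Step 1: b commutes with every unitary
  have hub : ∀ v : unitary A, b ≤ (v : A) * b * star (v : A) := by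
    intro v
    apply hb_least
    · simp only [IsSelfAdjoint, star_mul, star_star, hb_sa.star_eq, mul_assoc]
    · intro a ha
      have hconj := star_right_conjugate_le_conjugate (hb_ub a ha) (v : A)
      have hfix : (v : A) * a * star (v : A) = a := by
        rw [← (Set.mem_center_iff.mp (hS_central a ha)).comm (v : A), mul_assoc,
          (Unitary.mem_iff.mp v.prop).2, mul_one]
      rwa [hfix] at hconj
  have hunit : ∀ u : unitary A, (u : A) * b = b * (u : A) := by
    intro u
    have h1 : b ≤ (u : A) * b * star (u : A) := hub u
    have h2 : b ≤ star (u : A) * b * (u : A) := by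
      simpa using hub (star u)
    have h3 : (u : A) * b * star (u : A) ≤ b := by
      have h := star_left_conjugate_le_conjugate h2 (star (u : A))
      rw [star_star] at h
      calc (u : A) * b * star (u : A)
          ≤ (u : A) * (star (u : A) * b * (u : A)) * star (u : A) := h
        _ = b := by
          simp only [← mul_assoc, (Unitary.mem_iff.mp u.prop).2, one_mul]
          rw [mul_assoc, (Unitary.mem_iff.mp u.prop).2, mul_one]
    have heq : (u : A) * b * star (u : A) = b := le_antisymm h3 h1
    calc (u : A) * b = (u : A) * b * star (u : A) * (u : A) := by
          rw [mul_assoc ((u : A) * b), (Unitary.mem_iff.mp u.prop).1, mul_one]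
      _ = b * (u : A) := by rw [heq]
  -- Step 2: b commutes with every selfadjoint element
  have hcomm : ∀ x : A, IsSelfAdjoint x → x * b = b * x := by
    intro x hx
    set y : A := I • x with hy
    have hexp : ∀ t : ℝ, NormedSpace.exp (t • y) * b = b * NormedSpace.exp (t • y) := by
      intro t
      have htx : IsSelfAdjoint (t • x) := IsSelfAdjoint.smul (star_trivial t) hx
      have hmem : NormedSpace.exp (I • (t • x)) ∈ unitary A :=
        by
          let +nondep : NormedAlgebra ℚ A := .restrictScalars ℚ ℂ A
          exact exp_mem_unitary_of_mem_skewAdjoint (htx.smul_mem_skewAdjoint conj_I)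
      have hrw : NormedSpace.exp (t • y) = NormedSpace.exp (I • (t • x)) := by
        rw [hy, smul_comm]
      rw [hrw]
      exact hunit ⟨_, hmem⟩
    have hd : HasDerivAt (fun t : ℝ => NormedSpace.exp (t • y)) y 0 := by
      simpa using hasDerivAt_exp_smul_const (𝕂 := ℝ) y 0
    have hg : HasDerivAt (fun t : ℝ => NormedSpace.exp (t • y) * b - b * NormedSpace.exp (t • y))
        (y * b - b * y) 0 := (hd.mul_const b).sub (hd.const_mul b)
    have hzero : (fun t : ℝ => NormedSpace.exp (t • y) * b - b * NormedSpace.exp (t • y)) = fun _ => (0 : A) :=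
      funext fun t => sub_eq_zero.mpr (hexp t)
    rw [hzero] at hg
    have h0 : y * b - b * y = 0 := hg.unique (hasDerivAt_const 0 0)
    have hyb : y * b = b * y := sub_eq_zero.mp h0
    rw [hy, smul_mul_assoc, mul_smul_comm] at hyb
    exact smul_right_injective A I_ne_zero hyb
  -- Step 3: conclude
  rw [Semigroup.mem_center_iff]
  intro g
  have hre := hcomm _ (realPart g).prop
  have him := hcomm _ (imaginaryPart g).prop
  calc g * b = ((realPart g : A) + I • (imaginaryPart g : A)) * b := by
        rw [realPart_add_I_smul_imaginaryPart g]
    _ = b * ((realPart g : A) + I • (imaginaryPart g : A)) := by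
        rw [add_mul, mul_add, smul_mul_assoc, mul_smul_comm, hre, him]
    _ = b * g := by rw [realPart_add_I_smul_imaginaryPart g]
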